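/- (Theorem 1, converse direction) Let φ be a surjective map with dom φ ⊆ ⋃_{α ∈ C_k(I)} M^α and cod φ ⊆ M^I satisfying φ_{φ_a|_β} = φ_a and φ_a|_{dom a} = a for all a ∈ dom φ and all k-element β ⊆ I. Then (i) any two elements of cod φ agreeing on at least k points of I are equal, (ii) dom φ = ⋃_{x ∈ cod φ} C_k(x), and (iii) φ_a extends a for every a ∈ dom φ; hence φ is a flow with limited intersection of worldlines. -/
import Mathlib


/-- Theorem 1, converse direction: a surjective map satisfying the functional
equations is a flow with limited intersection of worldlines. -/
theorem stmt_4 {M : Type*} (k : ℕ) (I : Set ℝ) (hI : (k : ℕ∞) < I.encard)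
    (D : Set (Σ α : Set I, (α → M)))
    (hD : ∀ p ∈ D, p.1.encard = k)
    (φ : D → (I → M))
    (h1 : ∀ a : D, ∀ β : Set I, β.encard = k →
      ∃ hb : (⟨β, fun t => φ a ↑t⟩ : Σ α : Set I, (α → M)) ∈ D,
        φ ⟨⟨β, fun t => φ a ↑t⟩, hb⟩ = φ a)
    (h2 : ∀ a : D, ∀ t : a.1.1, φ a ↑t = a.1.2 t) :
    (∀ x₁ ∈ Set.range φ, ∀ x₂ ∈ Set.range φ,
        (k : ℕ∞) ≤ {t : I | x₁ t = x₂ t}.encard → x₁ = x₂) ∧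
    (D = {p | p.1.encard = (k : ℕ∞) ∧ ∃ x ∈ Set.range φ, ∀ t : p.1, x ↑t = p.2 t}) ∧
    (∀ a : D, ∀ t : a.1.1, φ a ↑t = a.1.2 t) := by
  refine ⟨?_, ?_, h2⟩
  · rintro x₁ ⟨a, rfl⟩ x₂ ⟨b, rfl⟩ hk
    obtain ⟨β, hβs, hβk⟩ := Set.exists_subset_encard_eq hk
    obtain ⟨ha, hea⟩ := h1 a β hβk
    obtain ⟨hb, heb⟩ := h1 b β hβk
    have hfun : (fun t : β => φ a ↑t) = fun t : β => φ b ↑t := by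
      funext t
      exact hβs t.2
    have : (⟨⟨β, fun t => φ a ↑t⟩, ha⟩ : D) = ⟨⟨β, fun t => φ b ↑t⟩, hb⟩ :=
      Subtype.ext (congrArg (Sigma.mk β) hfun)
    rw [← hea, ← heb, this]
  · ext p
    constructor
    · intro hp
      exact ⟨hD p hp, φ ⟨p, hp⟩, ⟨⟨p, hp⟩, rfl⟩, fun t => h2 ⟨p, hp⟩ t⟩
    · rintro ⟨hpk, x, ⟨a, rfl⟩, hx⟩
      obtain ⟨hb, -⟩ := h1 a p.1 hpk
      have hfun : (fun t : p.1 => φ a ↑t) = p.2 := funext hx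
      obtain ⟨α, f⟩ := p
      simp only at hfun
      rwa [hfun] at hb
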